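/- Let n ≥ 2. Then the cardinality of B equals n! times the Lebesgue measure of Δ, i.e. |B| = n!·Vol(Δ). -/

import Mathlib

open Finset MeasureTheory

/-- The set `B` of lattice points `v ∈ ℤ^n` with `-dᵢ < vᵢ ≤ aᵢ` for all `i`, and
for all `i < j`, `dⱼ(vᵢ - aᵢ) ≤ dᵢ vⱼ` and `dᵢ vⱼ < dⱼ vᵢ + dᵢ aⱼ`. -/
def setB (n : ℕ) (a d : Fin n → ℤ) : Set (Fin n → ℤ) :=
  {v | (∀ i, -d i < v i ∧ v i ≤ a i) ∧
    ∀ i j : Fin n, i < j →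
      d j * (v i - a i) ≤ d i * v j ∧ d i * v j < d j * v i + d i * a j}

/-- `Δ` is the convex hull of `0`, the points `aᵢ·eᵢ`, and `γ = (-d₁,…,-dₙ)` in `ℝ^n`. -/
def Delta (n : ℕ) (a d : Fin n → ℤ) : Set (Fin n → ℝ) :=
  convexHull ℝ (({0, fun i => -(d i : ℝ)} : Set (Fin n → ℝ)) ∪
    Set.range (fun i : Fin n => fun j => if j = i then (a i : ℝ) else 0))

set_option linter.unusedTactic false
set_option linter.unusedSectionVars false

noncomputable section
namespace SAux


def cornerS (n : ℕ) : Set (Fin n → ℝ) := {x | (∀ i, 0 ≤ x i) ∧ ∑ i, x i ≤ 1}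

def monoC (n : ℕ) (σ : Equiv.Perm (Fin n)) : Set (Fin n → ℝ) :=
  {x | (∀ i, 0 ≤ x i ∧ x i ≤ 1) ∧ Monotone (x ∘ σ)}

lemma isClosed_monoC (n : ℕ) (σ : Equiv.Perm (Fin n)) : IsClosed (monoC n σ) := by
  have h1 : monoC n σ = (⋂ i, {x : Fin n → ℝ | 0 ≤ x i} ∩ {x | x i ≤ 1}) ∩
      ⋂ (p : Fin n × Fin n) (_ : p.1 ≤ p.2), {x : Fin n → ℝ | x (σ p.1) ≤ x (σ p.2)} := by
    ext x
    simp only [monoC, Set.mem_setOf_eq, Set.mem_inter_iff, Set.mem_iInter, Set.mem_setOf_eq,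
      Set.mem_inter_iff]
    constructor
    · rintro ⟨hb, hm⟩
      exact ⟨fun i => ⟨(hb i).1, (hb i).2⟩, fun p hp => hm hp⟩
    · rintro ⟨hb, hm⟩
      exact ⟨fun i => ⟨(hb i).1, (hb i).2⟩, fun i j hij => hm (i, j) hij⟩
  rw [h1]
  refine IsClosed.inter (isClosed_iInter fun i => ?_) (isClosed_iInter fun p => isClosed_iInter fun _ => ?_)
  · exact (isClosed_le continuous_const (continuous_apply i)).inter
      (isClosed_le (continuous_apply i) continuous_const)
  · exact isClosed_le (continuous_apply _) (continuous_apply _)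

lemma monoC_subset_Icc (n : ℕ) (σ : Equiv.Perm (Fin n)) :
    monoC n σ ⊆ Set.Icc (0 : Fin n → ℝ) 1 := by
  rintro x ⟨hb, -⟩
  exact ⟨fun i => (hb i).1, fun i => (hb i).2⟩

lemma volume_monoC (n : ℕ) (σ : Equiv.Perm (Fin n)) :
    volume (monoC n σ) = volume (monoC n 1) := by
  have hmp := volume_measurePreserving_piCongrLeft (fun _ : Fin n => ℝ) σ.symm
  have happ : ∀ x : Fin n → ℝ, (MeasurableEquiv.piCongrLeft (fun _ : Fin n => ℝ) σ.symm) x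
      = x ∘ σ := by
    intro x; funext i
    simp [MeasurableEquiv.piCongrLeft, Equiv.piCongrLeft, Equiv.piCongrLeft']
  have hpre : (MeasurableEquiv.piCongrLeft (fun _ : Fin n => ℝ) σ.symm) ⁻¹' (monoC n 1)
      = monoC n σ := by
    ext x
    simp only [Set.mem_preimage, happ, monoC, Set.mem_setOf_eq]
    constructor
    · rintro ⟨hb, hm⟩
      refine ⟨fun i => ?_, ?_⟩
      · have := hb (σ.symm i); simpa using this
      · simpa using hm
    · rintro ⟨hb, hm⟩
      exact ⟨fun i => hb (σ i), by simpa using hm⟩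
  rw [← hpre]
  exact hmp.measure_preimage ((isClosed_monoC n 1).measurableSet.nullMeasurableSet)

lemma volume_pair_null (n : ℕ) (i j : Fin n) (hij : i ≠ j) :
    volume {x : Fin n → ℝ | x i = x j} = 0 := by
  have h1 : {x : Fin n → ℝ | x i = x j} =
      (LinearMap.ker ((LinearMap.proj i : (Fin n → ℝ) →ₗ[ℝ] ℝ) - LinearMap.proj j) : Set _) := by
    ext x
    simp [LinearMap.mem_ker, sub_eq_zero, eq_comm]
  rw [h1]
  refine Measure.addHaar_submodule _ _ (fun htop => ?_)
  have hx : (Pi.single i 1 : Fin n → ℝ) ∈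
      LinearMap.ker ((LinearMap.proj i : (Fin n → ℝ) →ₗ[ℝ] ℝ) - LinearMap.proj j) := by
    rw [htop]; trivial
  simp only [LinearMap.mem_ker, LinearMap.sub_apply, LinearMap.proj_apply] at hx
  rw [Pi.single_eq_same, Pi.single_eq_of_ne (Ne.symm hij)] at hx
  norm_num at hx

lemma volume_noninj_null (n : ℕ) :
    volume {x : Fin n → ℝ | ¬ Function.Injective x} = 0 := by
  refine measure_mono_null (t := ⋃ (i : Fin n) (j : Fin n) (_ : i ≠ j), {x : Fin n → ℝ | x i = x j}) ?_ ?_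
  · intro x hx
    simp only [Function.Injective, not_forall] at hx
    obtain ⟨i, j, hxij, hij⟩ := hx
    exact Set.mem_iUnion.2 ⟨i, Set.mem_iUnion.2 ⟨j, Set.mem_iUnion.2 ⟨hij, hxij⟩⟩⟩
  · refine measure_iUnion_null fun i => measure_iUnion_null fun j => measure_iUnion_null fun hij => ?_
    exact volume_pair_null n i j hij

lemma perm_eq_of_inj (n : ℕ) (σ τ : Equiv.Perm (Fin n)) (x : Fin n → ℝ)
    (hinj : Function.Injective x) (hσ : Monotone (x ∘ σ)) (hτ : Monotone (x ∘ τ)) : σ = τ := by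
  have hsm : ∀ (ρ : Equiv.Perm (Fin n)), Monotone (x ∘ ρ) → StrictMono (x ∘ ρ) := by
    intro ρ hm
    exact hm.strictMono_of_injective (hinj.comp ρ.injective)
  set p : Equiv.Perm (Fin n) := σ.trans τ.symm with hp
  have hcomp : (x ∘ τ) ∘ p = x ∘ σ := by
    funext i; simp [hp]
  have hpm : StrictMono p := by
    have hsmτ := hsm τ hτ
    have : Monotone ((x ∘ τ) ∘ p) := by rw [hcomp]; exact hσ
    intro i j hij
    exact hsmτ.lt_iff_lt.mp (by
      have := (hsm σ hσ) hij
      rw [← hcomp] at this; exact this)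
  have hcomp2 : (x ∘ σ) ∘ p.symm = x ∘ τ := by
    funext i; simp [hp]
  have hpm2 : StrictMono (p.symm : Fin n → Fin n) := by
    have hsmσ := hsm σ hσ
    intro i j hij
    exact hsmσ.lt_iff_lt.mp (by
      have := (hsm τ hτ) hij
      rw [← hcomp2] at this; exact this)
  have hid : ∀ i, p i = i := by
    intro i
    have hwf : WellFoundedLT (Fin n) := inferInstance
    have h1 : i ≤ p i := hpm.le_apply
    have h2 : p i ≤ i := by
      have h : p i ≤ p.symm (p i) := hpm2.le_apply
      simpa using h
    exact le_antisymm h2 h1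
  have : p = 1 := Equiv.ext fun i => hid i
  have := congrArg (fun q => q.trans τ) this
  simpa [hp, Equiv.trans_assoc, Equiv.Perm.one_trans] using this

lemma sum_volume_monoC (n : ℕ) :
    ∑ σ : Equiv.Perm (Fin n), volume (monoC n σ) = 1 := by
  have hnm : ∀ σ : Equiv.Perm (Fin n), NullMeasurableSet (monoC n σ) volume :=
    fun σ => (isClosed_monoC n σ).measurableSet.nullMeasurableSet
  have hae : Pairwise (Function.onFun (AEDisjoint volume) (monoC n ·)) := by
    intro σ τ hst
    refine measure_mono_null (t := {x : Fin n → ℝ | ¬ Function.Injective x}) ?_ (volume_noninj_null n)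
    rintro x ⟨⟨-, hmσ⟩, ⟨-, hmτ⟩⟩ hinj
    exact hst (perm_eq_of_inj n σ τ x hinj hmσ hmτ)
  have hU : ⋃ σ : Equiv.Perm (Fin n), monoC n σ = Set.Icc (0 : Fin n → ℝ) 1 := by
    apply Set.Subset.antisymm
    · exact Set.iUnion_subset fun σ => monoC_subset_Icc n σ
    · intro x hx
      exact Set.mem_iUnion.2 ⟨Tuple.sort x, ⟨fun i => ⟨hx.1 i, hx.2 i⟩, Tuple.monotone_sort x⟩⟩
  have := measure_iUnion₀ hae hnm
  rw [hU] at this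
  rw [← tsum_fintype (L := SummationFilter.unconditional _), ← this]
  rw [Real.volume_Icc_pi]
  simp

lemma card_mul_volume_monoC_one (n : ℕ) :
    (Nat.factorial n : ENNReal) * volume (monoC n 1) = 1 := by
  have h := sum_volume_monoC n
  have h2 : ∑ σ : Equiv.Perm (Fin n), volume (monoC n σ)
      = (Fintype.card (Equiv.Perm (Fin n)) : ENNReal) * volume (monoC n 1) := by
    rw [Finset.sum_congr rfl (fun σ _ => volume_monoC n σ)]
    simp [Finset.sum_const, mul_comm]
  rw [h2] at h
  rwa [Fintype.card_perm, Fintype.card_fin] at h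

def Mlow (m : ℕ) : Matrix (Fin (m+1)) (Fin (m+1)) ℝ :=
  fun i j => (if j = i then 1 else 0) - (if (j:ℕ)+1 = (i:ℕ) then 1 else 0)

lemma Mlow_mulVec (m : ℕ) (x : Fin (m+1) → ℝ) (i : Fin (m+1)) :
    (Mlow m).mulVec x i = x i - Fin.cases 0 (fun k => x k.castSucc) i := by
  unfold Matrix.mulVec Mlow dotProduct
  simp only [sub_mul, one_mul, Finset.sum_sub_distrib, ite_mul, zero_mul]
  congr 1
  · simp
  · induction i using Fin.cases with
    | zero => simp
    | succ k =>
      rw [Finset.sum_eq_single k.castSucc]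
      · simp
      · intro j _ hj
        rw [if_neg]
        intro hc
        apply hj
        have : (j : ℕ) = (k.castSucc : ℕ) := by simpa using hc
        exact Fin.ext this
      · intro h; exact absurd (Finset.mem_univ _) h

lemma Mlow_det (m : ℕ) : (Mlow m).det = 1 := by
  have h : (Mlow m).BlockTriangular OrderDual.toDual := by
    intro i j hij
    have hij' : i < j := hij
    unfold Mlow
    rw [if_neg, if_neg]
    · ring
    · intro hc; omega
    · intro hc; exact absurd hc (Fin.ne_of_lt hij').symm
  rw [Matrix.det_of_lowerTriangular _ h]
  have : ∀ i : Fin (m+1), Mlow m i i = 1 := by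
    intro i; unfold Mlow; rw [if_pos rfl, if_neg (by omega)]; ring
  simp [this]

lemma image_monoC (m : ℕ) :
    ⇑(Matrix.toLin' (Mlow m)) '' (monoC (m+1) 1) = cornerS (m+1) := by
  apply Set.Subset.antisymm
  · rintro y ⟨x, ⟨hb, hm⟩, rfl⟩
    have hm' : Monotone x := by simpa using hm
    constructor
    · intro i
      rw [Matrix.toLin'_apply, Mlow_mulVec]
      induction i using Fin.cases with
      | zero => simpa using (hb 0).1
      | succ k => simpa using hm' (Fin.castSucc_lt_succ (i := k)).le
    · have hsum : ∑ i, (Matrix.toLin' (Mlow m)) x i = x (Fin.last m) := by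
        simp only [Matrix.toLin'_apply, Mlow_mulVec, Finset.sum_sub_distrib]
        rw [Fin.sum_univ_castSucc, Fin.sum_univ_succ]
        simp
      rw [hsum]
      exact (hb _).2
  · rintro y ⟨hpos, hsum⟩
    refine ⟨fun i => ∑ j ∈ Finset.Iic i, y j, ⟨⟨fun i => ?_, ?_⟩, ?_⟩⟩
    · constructor
      · exact Finset.sum_nonneg fun j _ => hpos j
      · refine le_trans (Finset.sum_le_sum_of_subset_of_nonneg (Finset.subset_univ _)
          (fun j _ _ => hpos j)) hsum
    · have : Monotone (fun i : Fin (m+1) => ∑ j ∈ Finset.Iic i, y j) := by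
        intro i i' hii'
        exact Finset.sum_le_sum_of_subset_of_nonneg
          (fun j hj => by simp only [Finset.mem_Iic] at *; exact le_trans hj hii')
          (fun j _ _ => hpos j)
      simpa using this.comp (monotone_id (α := Fin (m+1)))
    · funext i
      rw [Matrix.toLin'_apply, Mlow_mulVec]
      induction i using Fin.cases with
      | zero =>
        have h0 : Finset.Iic (0 : Fin (m+1)) = {0} := by
          ext j; simp [Fin.le_zero_iff]
        simp [h0]
      | succ k =>
        have hins : Finset.Iic k.succ = insert k.succ (Finset.Iic k.castSucc) := by
          ext j
          simp only [Finset.mem_Iic, Finset.mem_insert]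
          constructor
          · intro h
            rcases eq_or_lt_of_le h with h1 | h1
            · exact Or.inl h1
            · right
              rw [Fin.le_def]; rw [Fin.lt_def] at h1
              simp only [Fin.val_succ, Fin.coe_castSucc] at *
              omega
          · rintro (rfl | h)
            · exact le_refl _
            · rw [Fin.le_def]; rw [Fin.le_def] at h
              simp only [Fin.val_succ, Fin.coe_castSucc] at *
              omega
        have hnotmem : k.succ ∉ Finset.Iic k.castSucc := by
          simp only [Finset.mem_Iic]
          intro h
          rw [Fin.le_def] at h
          simp at h
        rw [hins, Finset.sum_insert hnotmem]
        simp

lemma volume_cornerS_eq_monoC (m : ℕ) :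
    volume (cornerS (m+1)) = volume (monoC (m+1) 1) := by
  rw [← image_monoC m]
  rw [Measure.addHaar_image_linearMap]
  rw [LinearMap.det_toLin']
  rw [Mlow_det]
  simp


lemma fact_mul_volume_cornerS (n : ℕ) (hn : 0 < n) :
    (Nat.factorial n : ENNReal) * volume (cornerS n) = 1 := by
  obtain ⟨m, rfl⟩ := Nat.exists_eq_succ_of_ne_zero hn.ne'
  rw [volume_cornerS_eq_monoC]
  exact card_mul_volume_monoC_one (m+1)

section part2


variable {n : ℕ} (a d : Fin n → ℤ)

def γr : Fin n → ℝ := fun i => -(d i : ℝ)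

def Mmat (k : Fin n) : Matrix (Fin n) (Fin n) ℝ :=
  (Matrix.diagonal (fun i => (a i : ℝ))).updateCol k (γr d)

def TT (o : Option (Fin n)) : Set (Fin n → ℝ) :=
  match o with
  | none => ⇑(Matrix.toLin' (Matrix.diagonal (fun i => (a i : ℝ)))) '' cornerS n
  | some k => ⇑(Matrix.toLin' (Mmat a d k)) '' cornerS n

lemma Mmat_mulVec (k : Fin n) (c : Fin n → ℝ) (i : Fin n) :
    (Mmat a d k).mulVec c i = (if i = k then 0 else (a i : ℝ) * c i) - (d i : ℝ) * c k := by
  unfold Matrix.mulVec dotProduct Mmat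
  rw [← Finset.add_sum_erase _ _ (Finset.mem_univ k)]
  beta_reduce
  rw [Matrix.updateCol_apply, if_pos rfl]
  have h2 : ∑ j ∈ Finset.univ.erase k,
      ((Matrix.diagonal (fun i => (a i : ℝ))).updateCol k (γr d)) i j * c j
      = if i = k then 0 else (a i : ℝ) * c i := by
    have hc : ∀ j ∈ Finset.univ.erase k,
        ((Matrix.diagonal (fun i => (a i : ℝ))).updateCol k (γr d)) i j * c j
        = if i = j then (a i : ℝ) * c i else 0 := by
      intro j hj
      rw [Matrix.updateCol_apply, if_neg (Finset.mem_erase.1 hj).1, Matrix.diagonal_apply]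
      by_cases hij : i = j
      · subst hij; simp
      · simp [hij]
    rw [Finset.sum_congr rfl hc, Finset.sum_ite_eq]
    by_cases hik : i = k
    · subst hik; simp
    · simp [Finset.mem_erase, hik]
  rw [h2]
  unfold γr
  ring

lemma Mmat_det (k : Fin n) :
    (Mmat a d k).det = -(d k : ℝ) * ∏ j ∈ Finset.univ.erase k, (a j : ℝ) := by
  have h1 : (Mmat a d k).det = Matrix.cramer (Matrix.diagonal (fun i => (a i : ℝ))) (γr d) k := by
    rw [Matrix.cramer_apply]; rfl
  rw [h1, Matrix.cramer_eq_adjugate_mulVec, Matrix.adjugate_diagonal, Matrix.mulVec_diagonal]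
  unfold γr
  ring

lemma sum_smul_cols (M : Matrix (Fin n) (Fin n) ℝ) (c : Fin n → ℝ) :
    Matrix.toLin' M c = ∑ i, c i • (fun j => M j i) := by
  funext j
  rw [Matrix.toLin'_apply]
  unfold Matrix.mulVec dotProduct
  simp only [Finset.sum_apply, Pi.smul_apply, smul_eq_mul]
  exact Finset.sum_congr rfl fun i _ => mul_comm _ _

lemma TT_subset_Delta (o : Option (Fin n)) : TT a d o ⊆ Delta n a d := by
  have hgen : ∀ (M : Matrix (Fin n) (Fin n) ℝ),
      (∀ i, (fun j => M j i) ∈ (({0, fun i => -(d i : ℝ)} : Set (Fin n → ℝ)) ∪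
        Set.range (fun i : Fin n => fun j => if j = i then (a i : ℝ) else 0))) →
      ⇑(Matrix.toLin' M) '' cornerS n ⊆ Delta n a d := by
    intro M hcols
    rintro x ⟨c, ⟨hc0, hc1⟩, rfl⟩
    rw [sum_smul_cols]
    have hconv : Convex ℝ (Delta n a d) := convex_convexHull _ _
    have hz : ∀ o : Option (Fin n),
        (Option.elim o (0 : Fin n → ℝ) (fun i => fun j => M j i)) ∈ Delta n a d := by
      intro o
      match o with
      | none => exact subset_convexHull _ _ (Or.inl (Or.inl rfl))
      | some i => exact subset_convexHull _ _ (hcols i)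
    have hw : ∀ o : Option (Fin n), 0 ≤ Option.elim o (1 - ∑ i, c i) c := by
      intro o
      match o with
      | none => simpa using hc1
      | some i => exact hc0 i
    have hsum : ∑ o : Option (Fin n), Option.elim o (1 - ∑ i, c i) c = 1 := by
      rw [Fintype.sum_option]; simp
    have hmem := hconv.sum_mem (t := Finset.univ) (fun o _ => hw o) hsum (fun o _ => hz o)
    have heq : ∑ o : Option (Fin n), (Option.elim o (1 - ∑ i, c i) c) •
        (Option.elim o (0 : Fin n → ℝ) (fun i => fun j => M j i))
        = ∑ i, c i • (fun j => M j i) := by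
      rw [Fintype.sum_option]; simp
    rw [heq] at hmem
    exact hmem
  match o with
  | none =>
    apply hgen
    intro i
    right
    refine ⟨i, ?_⟩
    funext j
    rw [Matrix.diagonal_apply]
    by_cases h : j = i
    · subst h; simp
    · simp [h, Ne.symm h]
  | some k =>
    apply hgen
    intro i
    by_cases hik : i = k
    · subst hik
      left; right
      funext j
      unfold Mmat
      rw [Matrix.updateCol_apply, if_pos rfl]
      rfl
    · right
      refine ⟨i, ?_⟩
      funext j
      unfold Mmat
      rw [Matrix.updateCol_apply, if_neg hik, Matrix.diagonal_apply]
      by_cases h : j = i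
      · subst h; simp
      · simp [h, Ne.symm h]

def ftop : (Fin n → ℝ) →ₗ[ℝ] ℝ := ∑ i, ((a i : ℝ))⁻¹ • LinearMap.proj i

def flow (k : Fin n) : (Fin n → ℝ) →ₗ[ℝ] ℝ :=
  (∑ j ∈ Finset.univ.erase k, ((a j : ℝ))⁻¹ • LinearMap.proj j) -
    (((d k : ℝ))⁻¹ * (1 + ∑ j ∈ Finset.univ.erase k, (d j : ℝ) / (a j : ℝ))) • LinearMap.proj k

lemma ftop_apply (x : Fin n → ℝ) : ftop a x = ∑ i, ((a i : ℝ))⁻¹ * x i := by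
  unfold ftop; simp

lemma flow_apply (k : Fin n) (x : Fin n → ℝ) :
    flow a d k x = (∑ j ∈ Finset.univ.erase k, ((a j : ℝ))⁻¹ * x j) -
      (((d k : ℝ))⁻¹ * (1 + ∑ j ∈ Finset.univ.erase k, (d j : ℝ) / (a j : ℝ))) * x k := by
  unfold flow; simp

def Pset : Set (Fin n → ℝ) :=
  {x | ftop a x ≤ 1} ∩ ⋂ k, {x | flow a d k x ≤ 1}

lemma convex_Pset : Convex ℝ (Pset a d) :=
  Convex.inter (convex_halfSpace_le (LinearMap.isLinear _) 1)
    (convex_iInter fun _ => convex_halfSpace_le (LinearMap.isLinear _) 1)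

lemma Delta_subset_Pset (ha : ∀ i, 0 < a i) (hd : ∀ i, 0 < d i) :
    Delta n a d ⊆ Pset a d := by
  apply convexHull_min _ (convex_Pset a d)
  rintro x (hx | ⟨i, rfl⟩)
  · rcases hx with rfl | rfl
    · constructor
      · simp only [Set.mem_setOf_eq, map_zero]; norm_num
      · refine Set.mem_iInter.2 fun k => ?_
        simp only [Set.mem_setOf_eq, map_zero]; norm_num
    · have hS : ∀ k : Fin n, (0:ℝ) ≤ ∑ j ∈ Finset.univ.erase k, (d j : ℝ) / (a j : ℝ) :=
        fun k => Finset.sum_nonneg fun j _ => div_nonneg (le_of_lt (by exact_mod_cast hd j))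
          (le_of_lt (by exact_mod_cast ha j))
      constructor
      · rw [Set.mem_setOf_eq, ftop_apply]
        refine le_trans (Finset.sum_nonpos fun i _ => ?_) zero_le_one
        have h1 : (0:ℝ) ≤ ((a i : ℝ))⁻¹ := inv_nonneg.2 (le_of_lt (by exact_mod_cast ha i))
        have h2 : (-(d i : ℝ)) ≤ 0 := neg_nonpos.2 (le_of_lt (by exact_mod_cast hd i))
        exact mul_nonpos_of_nonneg_of_nonpos h1 h2
      · refine Set.mem_iInter.2 fun k => ?_
        rw [Set.mem_setOf_eq, flow_apply]
        have hdk : ((d k : ℝ)) ≠ 0 := ne_of_gt (by exact_mod_cast hd k)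
        have h1 : ∑ j ∈ Finset.univ.erase k, ((a j : ℝ))⁻¹ * (-(d j : ℝ))
            = -∑ j ∈ Finset.univ.erase k, (d j : ℝ) / (a j : ℝ) := by
          rw [← Finset.sum_neg_distrib]
          refine Finset.sum_congr rfl fun j _ => ?_
          rw [div_eq_mul_inv]; ring
        rw [h1]
        set S := ∑ j ∈ Finset.univ.erase k, (d j : ℝ) / (a j : ℝ) with hSdef
        have h2 : ((d k : ℝ))⁻¹ * (1 + S) * (-(d k : ℝ)) = -(1 + S) := by
          field_simp
        rw [h2]
        linarith
  · have hai : ((a i : ℝ)) ≠ 0 := ne_of_gt (by exact_mod_cast ha i)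
    constructor
    · rw [Set.mem_setOf_eq, ftop_apply]
      beta_reduce
      rw [Finset.sum_eq_single i]
      · rw [if_pos rfl, inv_mul_cancel₀ hai]
      · intro j _ hj; rw [if_neg hj, mul_zero]
      · intro h; exact absurd (Finset.mem_univ _) h
    · refine Set.mem_iInter.2 fun k => ?_
      rw [Set.mem_setOf_eq, flow_apply]
      beta_reduce
      by_cases hik : i = k
      · subst hik
        have h1 : ∑ j ∈ Finset.univ.erase i, ((a j : ℝ))⁻¹ * (if j = i then (a i:ℝ) else 0) = 0 := by
          refine Finset.sum_eq_zero fun j hj => ?_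
          rw [if_neg (Finset.mem_erase.1 hj).1, mul_zero]
        rw [h1, if_pos rfl]
        have hS : (0:ℝ) ≤ ∑ j ∈ Finset.univ.erase i, (d j : ℝ) / (a j : ℝ) :=
          Finset.sum_nonneg fun j _ => div_nonneg (le_of_lt (by exact_mod_cast hd j))
            (le_of_lt (by exact_mod_cast ha j))
        have hcoef : (0:ℝ) ≤ ((d i : ℝ))⁻¹ * (1 + ∑ j ∈ Finset.univ.erase i, (d j : ℝ) / (a j : ℝ)) := by
          refine mul_nonneg (inv_nonneg.2 (le_of_lt (by exact_mod_cast hd i))) (by linarith)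
        have hak : (0:ℝ) ≤ (a i : ℝ) := le_of_lt (by exact_mod_cast ha i)
        nlinarith
      · have h1 : ∑ j ∈ Finset.univ.erase k, ((a j : ℝ))⁻¹ * (if j = i then (a i:ℝ) else 0) = 1 := by
          rw [Finset.sum_eq_single_of_mem i (Finset.mem_erase.2 ⟨hik, Finset.mem_univ i⟩)]
          · rw [if_pos rfl, inv_mul_cancel₀ hai]
          · intro j _ hj; rw [if_neg hj, mul_zero]
        rw [h1, if_neg (Ne.symm hik), mul_zero, sub_zero]

lemma Pset_subset_union (ha : ∀ i, 0 < a i) (hd : ∀ i, 0 < d i) :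
    Pset a d ⊆ ⋃ o : Option (Fin n), TT a d o := by
  intro x hx
  obtain ⟨htop, hlow⟩ := hx
  rw [Set.mem_setOf_eq, ftop_apply] at htop
  by_cases hpos : ∀ i, 0 ≤ x i
  · refine Set.mem_iUnion.2 ⟨none, ?_⟩
    refine ⟨fun i => x i / (a i : ℝ), ⟨fun i => div_nonneg (hpos i)
      (le_of_lt (by exact_mod_cast ha i)), ?_⟩, ?_⟩
    · refine le_trans (le_of_eq ?_) htop
      refine Finset.sum_congr rfl fun i _ => ?_
      beta_reduce
      rw [div_eq_mul_inv]; ring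
    · funext i
      rw [Matrix.toLin'_apply, Matrix.mulVec_diagonal]
      beta_reduce
      have hai : ((a i : ℝ)) ≠ 0 := ne_of_gt (by exact_mod_cast ha i)
      field_simp
  · push_neg at hpos
    obtain ⟨i0, hi0⟩ := hpos
    obtain ⟨k, -, hk⟩ := Finset.exists_min_image Finset.univ (fun i => x i / (d i : ℝ))
      ⟨i0, Finset.mem_univ i0⟩
    have hdk : (0:ℝ) < (d k : ℝ) := by exact_mod_cast hd k
    have hxk : x k < 0 := by
      by_contra hcon
      push_neg at hcon
      have h1 := hk i0 (Finset.mem_univ i0)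
      have h2 : x i0 / (d i0 : ℝ) < 0 :=
        div_neg_of_neg_of_pos hi0 (by exact_mod_cast hd i0)
      have h3 : (0:ℝ) ≤ x k / (d k : ℝ) := div_nonneg hcon hdk.le
      linarith
    set s : ℝ := -x k / (d k : ℝ) with hs
    have hs0 : 0 < s := div_pos (neg_pos.2 hxk) hdk
    have hnum : ∀ j, 0 ≤ x j + s * (d j : ℝ) := by
      intro j
      have hdj : (0:ℝ) < (d j : ℝ) := by exact_mod_cast hd j
      have h1 : x k / (d k : ℝ) ≤ x j / (d j : ℝ) := hk j (Finset.mem_univ j)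
      have h2 : -s ≤ x j / (d j : ℝ) := by
        rw [hs, neg_div, neg_neg]
        exact h1
      have h3 : -s * (d j : ℝ) ≤ x j := (le_div_iff₀ hdj).1 h2
      linarith
    refine Set.mem_iUnion.2 ⟨some k, ?_⟩
    refine ⟨fun j => if j = k then s else (x j + s * (d j : ℝ)) / (a j : ℝ), ⟨fun j => ?_, ?_⟩, ?_⟩
    · beta_reduce
      by_cases hjk : j = k
      · rw [if_pos hjk]; exact hs0.le
      · rw [if_neg hjk]
        exact div_nonneg (hnum j) (le_of_lt (by exact_mod_cast ha j))
    · -- sum bound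
      beta_reduce
      have hlk := Set.mem_iInter.1 hlow k
      rw [Set.mem_setOf_eq, flow_apply] at hlk
      set S := ∑ j ∈ Finset.univ.erase k, (d j : ℝ) / (a j : ℝ) with hSdef
      have hsplit : ∑ j, (if j = k then s else (x j + s * (d j : ℝ)) / (a j : ℝ))
          = s + ∑ j ∈ Finset.univ.erase k, (x j + s * (d j : ℝ)) / (a j : ℝ) := by
        rw [← Finset.add_sum_erase _ _ (Finset.mem_univ k), if_pos rfl]
        congr 1
        exact Finset.sum_congr rfl fun j hj => by rw [if_neg (Finset.mem_erase.1 hj).1]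
      have hterm : ∑ j ∈ Finset.univ.erase k, (x j + s * (d j : ℝ)) / (a j : ℝ)
          = (∑ j ∈ Finset.univ.erase k, ((a j : ℝ))⁻¹ * x j) + s * S := by
        rw [hSdef, Finset.mul_sum, ← Finset.sum_add_distrib]
        refine Finset.sum_congr rfl fun j hj => ?_
        rw [add_div, div_eq_inv_mul, mul_div_assoc]
      have hsk : ((d k : ℝ))⁻¹ * x k = -s := by
        rw [hs]; field_simp
      have hcoefxk : (((d k : ℝ))⁻¹ * (1 + S)) * x k = -s * (1 + S) := by
        calc (((d k : ℝ))⁻¹ * (1 + S)) * x k = (((d k : ℝ))⁻¹ * x k) * (1 + S) := by ring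
        _ = -s * (1 + S) := by rw [hsk]
      rw [hsplit, hterm]
      rw [hcoefxk] at hlk
      linarith [hlk]
    · funext i
      rw [Matrix.toLin'_apply, Mmat_mulVec]
      beta_reduce
      by_cases hik : i = k
      · subst hik
        rw [if_pos rfl, if_pos rfl, hs]
        field_simp
        ring
      · rw [if_neg hik, if_neg hik, if_pos rfl]
        have hai : ((a i : ℝ)) ≠ 0 := ne_of_gt (by exact_mod_cast ha i)
        field_simp
        ring

lemma isCompact_cornerS : IsCompact (cornerS n) := by
  have hclosed : IsClosed (cornerS n) := by
    have : cornerS n = (⋂ i, {x : Fin n → ℝ | 0 ≤ x i}) ∩ {x | ∑ i, x i ≤ 1} := by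
      ext x; simp [cornerS, Set.mem_iInter]
    rw [this]
    exact (isClosed_iInter fun i => isClosed_le continuous_const (continuous_apply i)).inter
      (isClosed_le (by continuity) continuous_const)
  have hsub : cornerS n ⊆ Set.Icc (0 : Fin n → ℝ) 1 := by
    rintro x ⟨h0, h1⟩
    refine ⟨fun i => h0 i, fun i => ?_⟩
    calc x i ≤ ∑ j, x j := Finset.single_le_sum (fun j _ => h0 j) (Finset.mem_univ i)
    _ ≤ 1 := h1
  exact IsCompact.of_isClosed_subset isCompact_Icc hclosed hsub

lemma isCompact_TT (o : Option (Fin n)) : IsCompact (TT a d o) := by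
  match o with
  | none => exact (isCompact_cornerS).image (LinearMap.continuous_of_finiteDimensional _)
  | some k => exact (isCompact_cornerS).image (LinearMap.continuous_of_finiteDimensional _)

lemma volume_hyperplane (f : (Fin n → ℝ) →ₗ[ℝ] ℝ) (y : Fin n → ℝ) (hy : f y ≠ 0) :
    volume {x : Fin n → ℝ | f x = 0} = 0 := by
  have h1 : {x : Fin n → ℝ | f x = 0} = (LinearMap.ker f : Set (Fin n → ℝ)) := by
    ext x; simp [LinearMap.mem_ker]
  rw [h1]
  refine Measure.addHaar_submodule _ _ fun htop => hy ?_
  have : y ∈ LinearMap.ker f := by rw [htop]; trivial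
  exact LinearMap.mem_ker.1 this

lemma TT_none_nonneg (ha : ∀ i, 0 < a i) (x : Fin n → ℝ) (hx : x ∈ TT a d none) (i : Fin n) :
    0 ≤ x i := by
  obtain ⟨c, ⟨hc0, -⟩, rfl⟩ := hx
  rw [Matrix.toLin'_apply, Matrix.mulVec_diagonal]
  exact mul_nonneg (le_of_lt (by exact_mod_cast ha i)) (hc0 i)

lemma TT_some_facts (ha : ∀ i, 0 < a i) (hd : ∀ i, 0 < d i) (k : Fin n) (x : Fin n → ℝ)
    (hx : x ∈ TT a d (some k)) :
    x k ≤ 0 ∧ ∀ i, (d i : ℝ) * x k ≤ (d k : ℝ) * x i := by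
  obtain ⟨c, ⟨hc0, -⟩, rfl⟩ := hx
  have hxk : (Matrix.toLin' (Mmat a d k)) c k = -((d k : ℝ) * c k) := by
    rw [Matrix.toLin'_apply, Mmat_mulVec, if_pos rfl]; ring
  constructor
  · rw [hxk]
    have : (0:ℝ) ≤ (d k : ℝ) * c k :=
      mul_nonneg (le_of_lt (by exact_mod_cast hd k)) (hc0 k)
    linarith
  · intro i
    rw [hxk, Matrix.toLin'_apply, Mmat_mulVec]
    have h1 : (0:ℝ) ≤ (if i = k then 0 else (a i : ℝ) * c i) := by
      by_cases hik : i = k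
      · rw [if_pos hik]
      · rw [if_neg hik]
        exact mul_nonneg (le_of_lt (by exact_mod_cast ha i)) (hc0 i)
    have hdi : (0:ℝ) ≤ (d i : ℝ) := le_of_lt (by exact_mod_cast hd i)
    have hdk : (0:ℝ) ≤ (d k : ℝ) := le_of_lt (by exact_mod_cast hd k)
    nlinarith

lemma TT_aedisjoint (ha : ∀ i, 0 < a i) (hd : ∀ i, 0 < d i) :
    Pairwise (Function.onFun (AEDisjoint volume) (TT a d)) := by
  intro o1 o2 hne
  have key : ∀ k : Fin n, AEDisjoint volume (TT a d none) (TT a d (some k)) := by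
    intro k
    refine measure_mono_null (t := {x : Fin n → ℝ | (LinearMap.proj k : (Fin n → ℝ) →ₗ[ℝ] ℝ) x = 0}) ?_ ?_
    · rintro x ⟨hx1, hx2⟩
      have h1 := TT_none_nonneg a d ha x hx1 k
      have h2 := (TT_some_facts a d ha hd k x hx2).1
      simp only [Set.mem_setOf_eq, LinearMap.proj_apply]
      linarith
    · refine volume_hyperplane _ (Pi.single k 1) ?_
      simp
  have key2 : ∀ k l : Fin n, k ≠ l → AEDisjoint volume (TT a d (some k)) (TT a d (some l)) := by
    intro k l hkl
    set f : (Fin n → ℝ) →ₗ[ℝ] ℝ := (d k : ℝ) • (LinearMap.proj l : (Fin n → ℝ) →ₗ[ℝ] ℝ)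
        - (d l : ℝ) • (LinearMap.proj k : (Fin n → ℝ) →ₗ[ℝ] ℝ) with hfdef
    refine measure_mono_null (t := {x : Fin n → ℝ | f x = 0}) ?_ ?_
    · rintro x ⟨hx1, hx2⟩
      have h1 := (TT_some_facts a d ha hd k x hx1).2 l
      have h2 := (TT_some_facts a d ha hd l x hx2).2 k
      simp only [Set.mem_setOf_eq, hfdef, LinearMap.sub_apply, LinearMap.smul_apply,
        LinearMap.proj_apply, smul_eq_mul]
      linarith
    · refine volume_hyperplane f (Pi.single l 1) ?_
      have hdk : ((d k : ℝ)) ≠ 0 := ne_of_gt (by exact_mod_cast hd k)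
      simp [hfdef, Pi.single_eq_of_ne hkl, hdk]
  match o1, o2, hne with
  | none, none, hne => exact absurd rfl hne
  | none, some k, _ => exact key k
  | some k, none, _ => exact (key k).symm
  | some k, some l, hne => exact key2 k l (fun h => hne (by rw [h]))

lemma Delta_eq_union (ha : ∀ i, 0 < a i) (hd : ∀ i, 0 < d i) :
    Delta n a d = ⋃ o : Option (Fin n), TT a d o := by
  apply Set.Subset.antisymm
  · exact fun x hx => Pset_subset_union a d ha hd (Delta_subset_Pset a d ha hd hx)
  · exact Set.iUnion_subset fun o => TT_subset_Delta a d o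

lemma fact_mul_volume_Delta (ha : ∀ i, 0 < a i) (hd : ∀ i, 0 < d i)
    (hvol : (Nat.factorial n : ENNReal) * volume (cornerS n) = 1) :
    (Nat.factorial n : ENNReal) * volume (Delta n a d)
      = ENNReal.ofReal (∏ i, (a i : ℝ))
        + ∑ k, ENNReal.ofReal ((d k : ℝ) * ∏ j ∈ Finset.univ.erase k, (a j : ℝ)) := by
  rw [Delta_eq_union a d ha hd]
  rw [measure_iUnion₀ (TT_aedisjoint a d ha hd)
    (fun o => (isCompact_TT a d o).measurableSet.nullMeasurableSet)]
  rw [tsum_fintype, Fintype.sum_option]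
  have hnone : volume (TT a d none) = ENNReal.ofReal (∏ i, (a i : ℝ)) * volume (cornerS n) := by
    show volume (⇑(Matrix.toLin' (Matrix.diagonal (fun i => (a i : ℝ)))) '' cornerS n) = _
    rw [Measure.addHaar_image_linearMap, LinearMap.det_toLin', Matrix.det_diagonal]
    congr 2
    rw [abs_of_nonneg (Finset.prod_nonneg fun i _ => le_of_lt (by exact_mod_cast ha i))]
  have hsome : ∀ k, volume (TT a d (some k))
      = ENNReal.ofReal ((d k : ℝ) * ∏ j ∈ Finset.univ.erase k, (a j : ℝ)) * volume (cornerS n) := by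
    intro k
    show volume (⇑(Matrix.toLin' (Mmat a d k)) '' cornerS n) = _
    rw [Measure.addHaar_image_linearMap, LinearMap.det_toLin', Mmat_det]
    congr 2
    rw [abs_mul, abs_neg, abs_of_nonneg (le_of_lt (by exact_mod_cast hd k) : (0:ℝ) ≤ (d k:ℝ)),
      abs_of_nonneg (Finset.prod_nonneg fun j _ => le_of_lt (by exact_mod_cast ha j))]
  rw [hnone, Finset.sum_congr rfl (fun k _ => hsome k)]
  rw [mul_add, Finset.mul_sum]
  have hre : ∀ (A : ENNReal), (Nat.factorial n : ENNReal) * (A * volume (cornerS n)) = A := by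
    intro A
    rw [← mul_assoc, mul_comm (Nat.factorial n : ENNReal) A, mul_assoc, hvol, mul_one]
  rw [hre]
  congr 1
  exact Finset.sum_congr rfl fun k _ => hre _


end part2
section part3


-- integer division helpers
lemma intB {z p q : ℤ} (hq : 0 < q) : q * z ≤ p ↔ z ≤ p / q := by
  rw [Int.le_ediv_iff_mul_le hq, mul_comm]

lemma intA {z p q : ℤ} (hq : 0 < q) : p < q * z ↔ p / q + 1 ≤ z := by
  have h1 := Int.mul_ediv_add_emod p q
  have h2 := Int.emod_nonneg p (ne_of_gt hq)
  have h3 := Int.emod_lt_of_pos p hq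
  constructor
  · intro h
    by_contra hc
    push_neg at hc
    have h4 : z ≤ p / q := by omega
    have h5 : q * z ≤ q * (p / q) := mul_le_mul_of_nonneg_left h4 (le_of_lt hq)
    linarith
  · intro h
    have h5 : q * (p / q + 1) ≤ q * z := mul_le_mul_of_nonneg_left h (le_of_lt hq)
    have h6 : q * (p / q + 1) = q * (p / q) + q := by ring
    linarith

variable {n : ℕ} (a d : Fin n → ℤ)

def Pred (v : Fin n → ℤ) : Prop :=
  (∀ i, -d i < v i ∧ v i ≤ a i) ∧
    ∀ i j : Fin n, i < j →
      d j * (v i - a i) ≤ d i * v j ∧ d i * v j < d j * v i + d i * a j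

instance : DecidablePred (Pred a d) := fun _ => by unfold Pred; infer_instance

def Bfin : Finset (Fin n → ℤ) := (Finset.Icc (fun i => 1 - d i) a).filter (Pred a d)

def Qk (k : Fin n) (v : Fin n → ℤ) : Prop :=
  v k ≤ 0 ∧ (∀ j, j < k → d j * v k < d k * v j ∧ d k * v j ≤ d j * v k + d k * a j)
    ∧ (∀ j, k < j → d j * v k ≤ d k * v j ∧ d k * v j < d j * v k + d k * a j)

instance (k : Fin n) : DecidablePred (Qk a d k) := fun _ => by unfold Qk; infer_instance

def B0 : Finset (Fin n → ℤ) := Finset.Icc (fun _ => 1) a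

def Bk (k : Fin n) : Finset (Fin n → ℤ) :=
  (Finset.Icc (fun i => 1 - d i) a).filter (Qk a d k)

lemma mem_lowIcc {v : Fin n → ℤ} :
    v ∈ Finset.Icc (fun i => 1 - d i) a ↔ ∀ i, 1 - d i ≤ v i ∧ v i ≤ a i := by
  rw [Finset.mem_Icc]
  constructor
  · rintro ⟨h1, h2⟩ i
    exact ⟨h1 i, h2 i⟩
  · intro h
    exact ⟨fun i => (h i).1, fun i => (h i).2⟩

lemma mem_Bfin {v : Fin n → ℤ} :
    v ∈ Bfin a d ↔ (∀ i, 1 - d i ≤ v i ∧ v i ≤ a i) ∧ Pred a d v := by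
  rw [Bfin, Finset.mem_filter, mem_lowIcc]

lemma mem_B0 {v : Fin n → ℤ} : v ∈ B0 a ↔ ∀ i, 1 ≤ v i ∧ v i ≤ a i := by
  rw [B0, Finset.mem_Icc]
  constructor
  · rintro ⟨h1, h2⟩ i
    exact ⟨h1 i, h2 i⟩
  · intro h
    exact ⟨fun i => (h i).1, fun i => (h i).2⟩

lemma mem_Bk {v : Fin n → ℤ} (k : Fin n) :
    v ∈ Bk a d k ↔ (∀ i, 1 - d i ≤ v i ∧ v i ≤ a i) ∧ Qk a d k v := by
  rw [Bk, Finset.mem_filter, mem_lowIcc]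

lemma coe_Bfin : setB n a d = ↑(Bfin a d) := by
  ext v
  rw [Finset.mem_coe, mem_Bfin]
  simp only [setB, Set.mem_setOf_eq, Pred]
  constructor
  · rintro ⟨hb, hp⟩
    exact ⟨fun i => ⟨by have := (hb i).1; omega, (hb i).2⟩, hb, hp⟩
  · rintro ⟨hb, hp⟩
    exact hp

section partition

variable (ha : ∀ i, 0 < a i) (hd : ∀ i, 0 < d i)
include ha hd

lemma B0_subset_Bfin : B0 a ⊆ Bfin a d := by
  intro v hv
  rw [mem_B0] at hv
  have hb : ∀ i, 1 ≤ v i ∧ v i ≤ a i := hv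
  rw [mem_Bfin]
  refine ⟨fun i => ⟨by have := (hb i).1; have := hd i; omega, (hb i).2⟩, ?_, ?_⟩
  · intro i; have := hb i; have := hd i; omega
  · intro i j _
    have hdi := hd i; have hdj := hd j
    have hbi := hb i; have hbj := hb j
    constructor
    · have hl : d j * (v i - a i) ≤ 0 :=
        mul_nonpos_of_nonneg_of_nonpos (by omega) (by omega)
      have hr : 0 < d i * v j := mul_pos hdi (by omega)
      omega
    · have hl : d i * (v j - a j) ≤ 0 :=
        mul_nonpos_of_nonneg_of_nonpos (by omega) (by omega)
      have hr : 0 < d j * v i := mul_pos hdj (by omega)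
      nlinarith [hl, hr]

lemma Bk_subset_Bfin (k : Fin n) : Bk a d k ⊆ Bfin a d := by
  intro v hv
  rw [mem_Bk] at hv
  obtain ⟨hbnd, hk0, hlt, hgt⟩ := hv
  rw [mem_Bfin]
  refine ⟨hbnd, fun i => ⟨by have := (hbnd i).1; omega, (hbnd i).2⟩, ?_⟩
  -- unified cross bounds for j ≠ k
  have LB : ∀ j, j ≠ k → d j * v k ≤ d k * v j := by
    intro j hj
    rcases lt_or_gt_of_ne hj with h | h
    · exact le_of_lt (hlt j h).1
    · exact (hgt j h).1
  have UB : ∀ j, j ≠ k → d k * v j ≤ d j * v k + d k * a j := by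
    intro j hj
    rcases lt_or_gt_of_ne hj with h | h
    · exact (hlt j h).2
    · exact le_of_lt (hgt j h).2
  intro i j hij
  have hdi := hd i; have hdj := hd j; have hdk := hd k
  have hai := ha i; have haj := ha j; have hak := ha k
  by_cases hik : i = k
  · subst hik
    have hjk : i < j := hij
    constructor
    · have h1 := LB j (Fin.ne_of_gt hij)
      nlinarith [mul_pos hdj hak]
    · exact (hgt j hij).2
  · by_cases hjk : j = k
    · subst hjk
      constructor
      · have h1 := UB i hik
        nlinarith
      · have h1 := (hlt i hij).1
        nlinarith [mul_pos hdi hak]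
    · -- both differ from k
      constructor
      · -- d j * (v i - a i) ≤ d i * v j
        have h1 := UB i hik
        have h2 := LB j hjk
        have H : d k * (d j * (v i - a i)) ≤ d k * (d i * v j) := by
          nlinarith [mul_le_mul_of_nonneg_left h1 (le_of_lt hdj),
            mul_le_mul_of_nonneg_left h2 (le_of_lt hdi)]
        exact le_of_mul_le_mul_left H hdk
      · -- d i * v j < d j * v i + d i * a j
        rcases lt_or_gt_of_ne hjk with hj | hj
        · -- j < k, hence i < j < k
          have h1 := (hlt j hj).2
          have h2 := (hlt i (lt_trans hij hj)).1
          have H : d k * (d i * v j) < d k * (d j * v i + d i * a j) := by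
            nlinarith [mul_le_mul_of_nonneg_left h1 (le_of_lt hdi),
              mul_lt_mul_of_pos_left h2 hdj]
          exact lt_of_mul_lt_mul_left H (le_of_lt hdk)
        · -- k < j
          have h1 := (hgt j hj).2
          have h2 := LB i hik
          have H : d k * (d i * v j) < d k * (d j * v i + d i * a j) := by
            nlinarith [mul_lt_mul_of_pos_left h1 hdi,
              mul_le_mul_of_nonneg_left h2 (le_of_lt hdj)]
          exact lt_of_mul_lt_mul_left H (le_of_lt hdk)

lemma Bfin_subset_union : Bfin a d ⊆ B0 a ∪ Finset.univ.biUnion (Bk a d) := by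
  intro v hv
  have hv' := hv
  rw [mem_Bfin] at hv'
  obtain ⟨hbnd, -, hp⟩ := hv'
  have hp' : ∀ i j : Fin n, i < j →
      d j * (v i - a i) ≤ d i * v j ∧ d i * v j < d j * v i + d i * a j := hp
  by_cases hall : ∀ i, 1 ≤ v i
  · exact Finset.mem_union_left _ (by
      rw [mem_B0]; exact fun i => ⟨hall i, (hbnd i).2⟩)
  · push_neg at hall
    obtain ⟨i0, hi0⟩ := hall
    have hvi0 : v i0 ≤ 0 := by omega
    set w : Fin n → ℚ := fun i => (v i : ℚ) / (d i : ℚ) with hw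
    have hdq : ∀ i : Fin n, (0:ℚ) < (d i : ℚ) := fun i => by exact_mod_cast hd i
    have wle : ∀ i j : Fin n, w i ≤ w j ↔ d j * v i ≤ d i * v j := by
      intro i j
      rw [hw]
      beta_reduce
      rw [div_le_div_iff₀ (hdq i) (hdq j)]
      constructor
      · intro h
        have h' : (v i : ℚ) * (d j:ℚ) ≤ (v j:ℚ) * (d i:ℚ) := h
        have : ((d j * v i : ℤ) : ℚ) ≤ ((d i * v j : ℤ) : ℚ) := by push_cast; linarith
        exact_mod_cast this
      · intro h
        have : ((d j * v i : ℤ) : ℚ) ≤ ((d i * v j : ℤ) : ℚ) := by exact_mod_cast h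
        push_cast at this
        linarith
    obtain ⟨m0, -, hm0⟩ := Finset.exists_min_image Finset.univ w ⟨i0, Finset.mem_univ i0⟩
    have hMne : (Finset.univ.filter (fun i => w i = w m0)).Nonempty :=
      ⟨m0, by simp⟩
    set k := (Finset.univ.filter (fun i => w i = w m0)).min' hMne with hkdef
    have hkM : k ∈ Finset.univ.filter (fun i => w i = w m0) := Finset.min'_mem _ _
    have hkw : w k = w m0 := (Finset.mem_filter.1 hkM).2
    have hkmin : ∀ j, w k ≤ w j := fun j => hkw ▸ hm0 j (Finset.mem_univ j)
    have hkleast : ∀ j, w j = w m0 → k ≤ j := fun j hj =>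
      Finset.min'_le _ _ (Finset.mem_filter.2 ⟨Finset.mem_univ j, hj⟩)
    refine Finset.mem_union_right _ (Finset.mem_biUnion.2 ⟨k, Finset.mem_univ k, ?_⟩)
    rw [mem_Bk]
    refine ⟨hbnd, ?_, ?_, ?_⟩
    · -- v k ≤ 0
      have h1 := (wle k i0).1 (hkmin i0)
      have h2 : d k * v i0 ≤ 0 := mul_nonpos_of_nonneg_of_nonpos (le_of_lt (hd k)) hvi0
      nlinarith [hd i0]
    · -- j < k
      intro j hjk
      constructor
      · -- strict
        have hle : w k ≤ w j := hkmin j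
        have hne : w j ≠ w k := by
          intro h
          have : w j = w m0 := by rw [h, hkw]
          exact absurd (hkleast j this) (not_le.2 hjk)
        have hlt' : w k < w j := lt_of_le_of_ne hle (fun h => hne h.symm)
        have h1 := (wle j k)
        by_contra hc
        push_neg at hc
        exact absurd ((wle j k).2 hc) (not_le.2 hlt')
      · have := (hp' j k hjk).1
        nlinarith [this]
    · -- k < j
      intro j hkj
      exact ⟨(wle k j).1 (hkmin j), (hp' k j hkj).2⟩

lemma B0_disj_Bk (k : Fin n) : Disjoint (B0 a) (Bk a d k) := by
  rw [Finset.disjoint_left]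
  intro v hv hv2
  rw [mem_B0] at hv
  rw [mem_Bk] at hv2
  have h1 : (1:ℤ) ≤ v k := (hv k).1
  have h2 : v k ≤ 0 := hv2.2.1
  omega

lemma Bk_disj (k l : Fin n) (hkl : k ≠ l) : Disjoint (Bk a d k) (Bk a d l) := by
  rw [Finset.disjoint_left]
  intro v hv hv2
  rw [mem_Bk] at hv hv2
  rcases lt_or_gt_of_ne hkl with h | h
  · have h1 := (hv.2.2.2 l h).1
    have h2 := (hv2.2.2.1 k h).1
    omega
  · have h1 := (hv.2.2.1 l h).1
    have h2 := (hv2.2.2.2 k h).1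
    omega

lemma Bfin_eq_union : Bfin a d = B0 a ∪ Finset.univ.biUnion (Bk a d) := by
  apply Finset.Subset.antisymm
  · exact Bfin_subset_union a d ha hd
  · rw [Finset.union_subset_iff]
    refine ⟨B0_subset_Bfin a d ha hd, ?_⟩
    rw [Finset.biUnion_subset]
    exact fun k _ => Bk_subset_Bfin a d ha hd k

lemma card_Bfin : (Bfin a d).card = (B0 a).card + ∑ k, (Bk a d k).card := by
  rw [Bfin_eq_union a d ha hd]
  rw [Finset.card_union_of_disjoint]
  · congr 1
    rw [Finset.card_biUnion]
    intro k _ l _ hkl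
    exact Bk_disj a d ha hd k l hkl
  · rw [Finset.disjoint_right]
    intro v hv
    rw [Finset.mem_biUnion] at hv
    obtain ⟨k, -, hk⟩ := hv
    exact fun hv0 => (Finset.disjoint_left.1 (B0_disj_Bk a d ha hd k)) hv0 hk

end partition

lemma card_B0 (ha : ∀ i, 0 < a i) : (B0 a (n := n)).card = ∏ i, (a i).toNat := by
  rw [B0, Pi.card_Icc]
  refine Finset.prod_congr rfl fun i _ => ?_
  rw [Int.card_Icc]
  have := ha i
  omega


section cardBk

variable (ha : ∀ i, 0 < a i) (hd : ∀ i, 0 < d i)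

def off (k : Fin n) (t : ℤ) (j : Fin n) : ℤ :=
  if j < k then (d j * t) / (d k) + 1 else -((-(d j * t)) / (d k))

include hd in
lemma off_lt_iff (k j : Fin n) (hj : j < k) (t z : ℤ) :
    (d j * t < d k * z ∧ d k * z ≤ d j * t + d k * a j) ↔
      (off d k t j ≤ z ∧ z ≤ off d k t j + (a j - 1)) := by
  unfold off
  rw [if_pos hj]
  have hq : 0 < d k := hd k
  constructor
  · rintro ⟨h1, h2⟩
    have e1 := (intA hq).1 h1
    have e2 : z - a j ≤ d j * t / d k := (intB hq).1 (by nlinarith [h2])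
    omega
  · rintro ⟨h1, h2⟩
    have e1 : d j * t < d k * z := (intA hq).2 (by omega)
    have e2 : d k * (z - a j) ≤ d j * t := (intB hq).2 (by omega)
    refine ⟨e1, by nlinarith [e2]⟩

include hd in
lemma off_gt_iff (k j : Fin n) (hj : k < j) (t z : ℤ) :
    (d j * t ≤ d k * z ∧ d k * z < d j * t + d k * a j) ↔
      (off d k t j ≤ z ∧ z ≤ off d k t j + (a j - 1)) := by
  unfold off
  rw [if_neg (by exact fun h => absurd (lt_trans h hj) (lt_irrefl j))]
  have hq : 0 < d k := hd k
  constructor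
  · rintro ⟨h1, h2⟩
    have e1 : -z ≤ (-(d j * t)) / d k := (intB hq).1 (by nlinarith [h1])
    have e2 : (-(d j * t)) / d k + 1 ≤ a j - z := (intA hq).1 (by nlinarith [h2])
    omega
  · rintro ⟨h1, h2⟩
    have e1 : d k * (-z) ≤ -(d j * t) := (intB hq).2 (by omega)
    have e2 : -(d j * t) < d k * (a j - z) := (intA hq).2 (by omega)
    constructor
    · nlinarith [e1]
    · nlinarith [e2]

include ha hd in
lemma cross_bounds (k j : Fin n) (t z : ℤ) (ht : 1 - d k ≤ t) (ht0 : t ≤ 0)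
    (h1 : d j * t ≤ d k * z) (h2 : d k * z ≤ d j * t + d k * a j) :
    1 - d j ≤ z ∧ z ≤ a j := by
  have hdk := hd k
  have hdj := hd j
  have haj := ha j
  constructor
  · have A : d k * (-d j) < d k * z := by nlinarith [mul_le_mul_of_nonneg_left ht (le_of_lt hdj)]
    have := lt_of_mul_lt_mul_left A (le_of_lt hdk)
    omega
  · have B : d k * z ≤ d k * a j := by nlinarith [mul_nonpos_of_nonneg_of_nonpos (le_of_lt hdj) ht0]
    exact le_of_mul_le_mul_left B hdk

lemma mem_targetIcc (k : Fin n) {u : Fin n → ℤ} :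
    u ∈ Finset.Icc (fun j => if j = k then 1 - d k else 0)
      (fun j => if j = k then 0 else a j - 1) ↔
      ∀ j, (if j = k then 1 - d k else 0) ≤ u j ∧ u j ≤ (if j = k then 0 else a j - 1) := by
  rw [Finset.mem_Icc]
  constructor
  · rintro ⟨hl, hr⟩ j
    exact ⟨hl j, hr j⟩
  · intro h
    exact ⟨fun j => (h j).1, fun j => (h j).2⟩

include ha hd in
lemma card_Bk (k : Fin n) :
    (Bk a d k).card = (d k).toNat * ∏ j ∈ Finset.univ.erase k, (a j).toNat := by
  have hcard : (Bk a d k).card = (Finset.Icc (fun j => if j = k then 1 - d k else 0)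
      (fun j => if j = k then 0 else a j - 1)).card := by
    refine Finset.card_bij'
      (i := fun v _ => fun j => if j = k then v k else v j - off d k (v k) j)
      (j := fun u _ => fun j => if j = k then u k else u j + off d k (u k) j)
      ?_ ?_ ?_ ?_
    · intro v hv
      rw [mem_Bk] at hv
      obtain ⟨hbnd, hk0, hlt, hgt⟩ := hv
      rw [mem_targetIcc]
      intro j
      by_cases hjk : j = k
      · subst hjk
        simp only [if_pos rfl]
        exact ⟨(hbnd j).1, hk0⟩
      · simp only [if_neg hjk]
        rcases lt_or_gt_of_ne hjk with h | h
        · have := ((off_lt_iff a d hd k j h (v k) (v j)).1 (hlt j h))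
          omega
        · have := ((off_gt_iff a d hd k j h (v k) (v j)).1 (hgt j h))
          omega
    · intro u hu
      rw [mem_targetIcc] at hu
      have hukl : 1 - d k ≤ u k := by have := (hu k).1; simpa using this
      have huku : u k ≤ 0 := by have := (hu k).2; simpa using this
      rw [mem_Bk]
      have hoffb : ∀ j, j ≠ k → (off d k (u k) j ≤ u j + off d k (u k) j ∧
          u j + off d k (u k) j ≤ off d k (u k) j + (a j - 1)) := by
        intro j hjk
        have h1 := (hu j).1
        have h2 := (hu j).2
        rw [if_neg hjk] at h1 h2
        omega
      constructor
      · intro i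
        by_cases hik : i = k
        · subst hik
          have := ha i
          simp only [if_pos rfl, if_true]
          constructor
          · omega
          · omega
        · simp only [if_neg hik]
          rcases lt_or_gt_of_ne hik with h | h
          · have hc := (off_lt_iff a d hd k i h (u k) (u i + off d k (u k) i)).2 (hoffb i hik)
            exact cross_bounds a d ha hd k i (u k) _ hukl huku (le_of_lt hc.1) hc.2
          · have hc := (off_gt_iff a d hd k i h (u k) (u i + off d k (u k) i)).2 (hoffb i hik)
            exact cross_bounds a d ha hd k i (u k) _ hukl huku hc.1 (le_of_lt hc.2)
      · refine ⟨by simp only [if_pos rfl]; exact huku, ?_, ?_⟩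
        · intro j hjk
          have hne : j ≠ k := Fin.ne_of_lt hjk
          simp only [if_pos rfl, if_neg hne]
          exact (off_lt_iff a d hd k j hjk (u k) (u j + off d k (u k) j)).2 (hoffb j hne)
        · intro j hjk
          have hne : j ≠ k := Fin.ne_of_gt hjk
          simp only [if_pos rfl, if_neg hne]
          exact (off_gt_iff a d hd k j hjk (u k) (u j + off d k (u k) j)).2 (hoffb j hne)
    · intro v hv
      funext j
      by_cases hjk : j = k
      · subst hjk; simp
      · simp [hjk]
    · intro u hu
      funext j
      by_cases hjk : j = k
      · subst hjk; simp
      · simp [hjk]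
  rw [hcard, Pi.card_Icc]
  rw [← Finset.mul_prod_erase Finset.univ _ (Finset.mem_univ k)]
  congr 1
  · rw [if_pos rfl, if_pos rfl, Int.card_Icc]
    have := hd k
    omega
  · refine Finset.prod_congr rfl fun j hj => ?_
    have hjk : j ≠ k := (Finset.mem_erase.1 hj).1
    rw [if_neg hjk, if_neg hjk, Int.card_Icc]
    have := ha j
    omega

include ha hd in
lemma card_Bfin_total : (Bfin a d).card
    = ∏ i, (a i).toNat + ∑ k, (d k).toNat * ∏ j ∈ Finset.univ.erase k, (a j).toNat := by
  rw [card_Bfin a d ha hd, card_B0 a ha]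
  congr 1
  exact Finset.sum_congr rfl fun k _ => card_Bk a d ha hd k

end cardBk


end part3
end SAux
end

theorem stmt2 (n : ℕ) (hn : 2 ≤ n) (a d : Fin n → ℤ)
    (ha : ∀ i, 0 < a i) (hd : ∀ i, 0 < d i) :
    ((setB n a d).ncard : ENNReal) = (Nat.factorial n : ENNReal) * volume (Delta n a d) := by
  have h0 : 0 < n := by omega
  have hvolS : (Nat.factorial n : ENNReal) * volume (SAux.cornerS n) = 1 :=
    SAux.fact_mul_volume_cornerS n h0
  rw [SAux.fact_mul_volume_Delta a d ha hd hvolS]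
  rw [SAux.coe_Bfin a d, Set.ncard_coe_finset, SAux.card_Bfin_total a d ha hd]
  have hcast : ∀ z : ℤ, 0 < z → ((z.toNat : ℕ) : ENNReal) = ENNReal.ofReal (z : ℝ) := by
    intro z hz
    rw [← ENNReal.ofReal_natCast]
    congr 1
    exact_mod_cast Int.toNat_of_nonneg hz.le
  have hprod : ∀ (s : Finset (Fin n)), ENNReal.ofReal (∏ i ∈ s, (a i : ℝ))
      = ∏ i ∈ s, ((a i).toNat : ENNReal) := by
    intro s
    rw [ENNReal.ofReal_prod_of_nonneg (fun i _ => by exact_mod_cast (ha i).le)]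
    exact Finset.prod_congr rfl fun i _ => (hcast _ (ha i)).symm
  have hterm : ∀ k : Fin n, ENNReal.ofReal ((d k : ℝ) * ∏ j ∈ Finset.univ.erase k, (a j : ℝ))
      = ((d k).toNat : ENNReal) * ∏ j ∈ Finset.univ.erase k, ((a j).toNat : ENNReal) := by
    intro k
    rw [ENNReal.ofReal_mul (by exact_mod_cast (hd k).le), hcast _ (hd k), hprod]
  rw [hprod, Finset.sum_congr rfl (fun k _ => hterm k)]
  push_cast
  rfl
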